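/- Let F be continuous and strictly increasing on [0,K] with F(0)=0, F(K)=1, and derivative f > 0 on (0,K). Let λ₁ ≤ λ₂ be two thresholds in (0,K) with p_i = 1 − F(λ_i), and let G_i(x) = (F(x) − F(λ_i))/(1 − F(λ_i)) for x ≥ λ_i. Suppose (i) the low-threshold player's zero-profit condition holds: W·∫_{λ₂}^K G₂(x)·f(x) dx = c, and (ii) the high-threshold player's Bellman equation with indifference value V₂ = W·G₁(λ₂) holds: W·G₁(λ₂)·(1 − F(λ₂)) = −c + W·∫_{λ₂}^K G₁(x)·f(x) dx. Then p₁ = p₂ and λ₁ = λ₂: with two players there are no asymmetric equilibria. -/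

import Mathlib

open intervalIntegral

lemma key_integral
    (K : ℝ)
    (F f : ℝ → ℝ)
    (hFcont : ContinuousOn F (Set.Icc 0 K))
    (hFmono : StrictMonoOn F (Set.Icc 0 K))
    (hderiv : ∀ x ∈ Set.Ioo 0 K, HasDerivAt F (f x) x)
    (hfpos : ∀ x ∈ Set.Ioo 0 K, 0 < f x)
    (lam : ℝ) (h₂ : lam ∈ Set.Ioo 0 K)
    (a : ℝ) (ha : a ≤ F lam) :
    ∫ x in lam..K, (F x - a) * f x
      = ((F K - a) ^ 2 - (F lam - a) ^ 2) / 2 := by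
  have hsub : Set.Icc lam K ⊆ Set.Icc 0 K :=
    Set.Icc_subset_Icc h₂.1.le le_rfl
  have hsub' : Set.Ioo lam K ⊆ Set.Ioo 0 K :=
    Set.Ioo_subset_Ioo h₂.1.le le_rfl
  set g : ℝ → ℝ := fun x => (F x - a) ^ 2 / 2 with hg
  have hgc : ContinuousOn g (Set.Icc lam K) :=
    (((hFcont.mono hsub).sub continuousOn_const).pow 2).div_const 2
  have hgd : ∀ x ∈ Set.Ioo lam K, HasDerivAt g ((F x - a) * f x) x := by
    intro x hx
    have := (((hderiv x (hsub' hx)).sub_const a).pow 2).div_const 2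
    exact this.congr_deriv (by ring)
  have hpos : ∀ x ∈ Set.Ioo lam K, 0 ≤ (F x - a) * f x := by
    intro x hx
    have hxI : x ∈ Set.Icc 0 K := ⟨(h₂.1.trans hx.1).le, hx.2.le⟩
    have : F lam ≤ F x :=
      (hFmono ⟨h₂.1.le, h₂.2.le⟩ hxI hx.1).le
    exact mul_nonneg (by linarith) (hfpos x (hsub' hx)).le
  have hlam : lam ≤ K := h₂.2.le
  have hint : IntervalIntegrable (fun x => (F x - a) * f x)
      MeasureTheory.volume lam K := by
    apply intervalIntegrable_deriv_of_nonneg (g := g)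
    · rwa [Set.uIcc_of_le hlam]
    · rw [min_eq_left hlam, max_eq_right hlam]; exact hgd
    · rw [min_eq_left hlam, max_eq_right hlam]; exact hpos
  have := integral_eq_sub_of_hasDeriv_right_of_le hlam hgc
    (fun x hx => (hgd x hx).hasDerivWithinAt) hint
  rw [this]
  simp only [hg]
  ring

theorem stmt_3
    (K : ℝ) (hK : 0 < K)
    (F f : ℝ → ℝ)
    (hFcont : ContinuousOn F (Set.Icc 0 K))
    (hFmono : StrictMonoOn F (Set.Icc 0 K))
    (hF0 : F 0 = 0) (hFK : F K = 1)
    (hderiv : ∀ x ∈ Set.Ioo 0 K, HasDerivAt F (f x) x)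
    (hfpos : ∀ x ∈ Set.Ioo 0 K, 0 < f x)
    (c W : ℝ) (hc : 0 < c) (hW : 0 < W)
    (lam₁ lam₂ : ℝ) (h₁ : lam₁ ∈ Set.Ioo 0 K) (h₂ : lam₂ ∈ Set.Ioo 0 K)
    (hle : lam₁ ≤ lam₂)
    -- (i) low-threshold player's zero-profit condition
    (hzp : W * ∫ x in lam₂..K, ((F x - F lam₂) / (1 - F lam₂)) * f x = c)
    -- (ii) high-threshold player's Bellman equation with V₂ = W·G₁(λ₂)
    (hbellman :
      W * ((F lam₂ - F lam₁) / (1 - F lam₁)) * (1 - F lam₂)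
        = -c + W * ∫ x in lam₂..K, ((F x - F lam₁) / (1 - F lam₁)) * f x) :
    (1 - F lam₁) = (1 - F lam₂) ∧ lam₁ = lam₂ := by
  have h₁I : lam₁ ∈ Set.Icc 0 K := ⟨h₁.1.le, h₁.2.le⟩
  have h₂I : lam₂ ∈ Set.Icc 0 K := ⟨h₂.1.le, h₂.2.le⟩
  have h0I : (0:ℝ) ∈ Set.Icc 0 K := ⟨le_rfl, hK.le⟩
  have hKI : K ∈ Set.Icc 0 K := ⟨hK.le, le_rfl⟩
  have ha12 : F lam₁ ≤ F lam₂ := by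
    rcases eq_or_lt_of_le hle with h | h
    · rw [h]
    · exact (hFmono h₁I h₂I h).le
  have ha1pos : 0 < F lam₁ := by
    have := hFmono h0I h₁I h₁.1; rwa [hF0] at this
  have ha2lt : F lam₂ < 1 := by
    have := hFmono h₂I hKI h₂.2; rwa [hFK] at this
  have hp₁ : 0 < 1 - F lam₁ := by linarith
  have hp₂ : 0 < 1 - F lam₂ := by linarith
  -- rewrite both integrals
  have key₂ := key_integral K F f hFcont hFmono hderiv hfpos lam₂ h₂ (F lam₂) le_rfl
  have key₁ := key_integral K F f hFcont hFmono hderiv hfpos lam₂ h₂ (F lam₁) ha12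
  have hrw₂ : (∫ x in lam₂..K, ((F x - F lam₂) / (1 - F lam₂)) * f x)
      = (1 / (1 - F lam₂)) * ∫ x in lam₂..K, (F x - F lam₂) * f x := by
    rw [← intervalIntegral.integral_const_mul]
    congr 1; funext x; ring
  have hrw₁ : (∫ x in lam₂..K, ((F x - F lam₁) / (1 - F lam₁)) * f x)
      = (1 / (1 - F lam₁)) * ∫ x in lam₂..K, (F x - F lam₁) * f x := by
    rw [← intervalIntegral.integral_const_mul]
    congr 1; funext x; ring
  rw [hrw₂, key₂, hFK] at hzp
  rw [hrw₁, key₁, hFK] at hbellman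
  set A := F lam₁ with hA
  set B := F lam₂ with hB
  have hinv₁ : (1 - A) * (1 - A)⁻¹ = 1 := mul_inv_cancel₀ hp₁.ne'
  have hinv₂ : (1 - B) * (1 - B)⁻¹ = 1 := mul_inv_cancel₀ hp₂.ne'
  have h1 : W * (1 - B) = 2 * c := by
    linear_combination 2 * hzp - W * (1 - B) * hinv₂
  have h2' : 2 * W * (B - A) * (1 - B)
      = -c * 2 * (1 - A) + W * ((1 - A) ^ 2 - (B - A) ^ 2) := by
    linear_combination (2 * (1 - A)) * hbellman
      + (W * ((1 - A) ^ 2 - (B - A) ^ 2) - 2 * W * (B - A) * (1 - B)) * hinv₁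
  have hq : W * (1 - B) * (B - A) = 0 := by
    linear_combination h2' + (1 - A) * h1
  have hBA : B = A := by
    have := mul_pos hW hp₂
    rcases mul_eq_zero.1 hq with h | h
    · nlinarith
    · linarith
  refine ⟨by rw [hBA], ?_⟩
  exact hFmono.injOn h₁I h₂I hBA.symm
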